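/- Let X and Y be finite nonempty sets, d a metric on X, ε ≥ 0, δ ∈ [0,1], and Φ ⊆ X×X. If a mechanism A : X → D(Y) provides (ε,d,δ)-extended differential privacy with respect to Φ, then A provides (ε, W∞, δ·|Φ|)-extended distribution privacy with respect to the relation Φ#∞; that is, for every pair (λ0,λ1) ∈ Φ#∞ and every R ⊆ Y, A#(λ0)[R] ≤ e^{ε·W∞(λ0,λ1)}·A#(λ1)[R] + δ·|Φ|, where W∞ is the ∞-Wasserstein metric with respect to d. -/

import Mathlib

/-!
Common definitions: probability distributions on finite sets, mechanisms,
liftings, couplings, lifted relations, Wasserstein metric, privacy notions.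
-/

/-- `l` is a probability distribution on the finite set `X`. -/
def IsDist {X : Type*} [Fintype X] (l : X → ℝ) : Prop :=
  (∀ x, 0 ≤ l x) ∧ ∑ x, l x = 1

/-- `A` is a mechanism from `X` to `Y`: each `A x` is a distribution on `Y`. -/
def IsMech {X Y : Type*} [Fintype X] [Fintype Y] (A : X → Y → ℝ) : Prop :=
  ∀ x, IsDist (A x)

/-- Probability that a distribution `μ` assigns to a set `R`. -/
def probOf {Y : Type*} (μ : Y → ℝ) (R : Finset Y) : ℝ := ∑ y ∈ R, μ y

/-- The lifting `A#` of a mechanism `A`, applied to an input distribution `l`. -/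
def liftDist {X Y : Type*} [Fintype X] (A : X → Y → ℝ) (l : X → ℝ) : Y → ℝ :=
  fun y => ∑ x, l x * A x y

/-- `γ` is a coupling of `l0` and `l1`. -/
def IsCoupling {X : Type*} [Fintype X] (γ : X × X → ℝ) (l0 l1 : X → ℝ) : Prop :=
  IsDist γ ∧ (∀ x0, l0 x0 = ∑ x1, γ (x0, x1)) ∧ (∀ x1, l1 x1 = ∑ x0, γ (x0, x1))

/-- The lifted relation `Φ#` on distributions. -/
def liftRel {X : Type*} [Fintype X] (Φ : Finset (X × X)) (l0 l1 : X → ℝ) : Prop :=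
  IsDist l0 ∧ IsDist l1 ∧ ∃ γ, IsCoupling γ l0 l1 ∧ ∀ p, 0 < γ p → p ∈ Φ

/-- The largest move `max_{(x0,x1) ∈ supp γ} d x0 x1` of a coupling `γ`. -/
noncomputable def maxCost {X : Type*} (d : X → X → ℝ) (γ : X × X → ℝ) : ℝ :=
  sSup {r | ∃ p : X × X, 0 < γ p ∧ r = d p.1 p.2}

/-- The ∞-Wasserstein metric w.r.t. `d`. -/
noncomputable def Winf {X : Type*} [Fintype X] (d : X → X → ℝ) (l0 l1 : X → ℝ) : ℝ :=
  sInf {r | ∃ γ, IsCoupling γ l0 l1 ∧ maxCost d γ = r}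

/-- The relation `Φ#∞`: pairs of distributions admitting a coupling supported in `Φ`
that attains the ∞-Wasserstein metric. -/
def liftRelInf {X : Type*} [Fintype X] (d : X → X → ℝ) (Φ : Finset (X × X))
    (l0 l1 : X → ℝ) : Prop :=
  IsDist l0 ∧ IsDist l1 ∧
    ∃ γ, IsCoupling γ l0 l1 ∧ (∀ p, 0 < γ p → p ∈ Φ) ∧ maxCost d γ = Winf d l0 l1

/-- `d` is a metric on `X`. -/
structure IsMetric {X : Type*} (d : X → X → ℝ) : Prop where
  nonneg : ∀ x y, 0 ≤ d x y
  eq_zero_iff : ∀ x y, d x y = 0 ↔ x = y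
  symm : ∀ x y, d x y = d y x
  triangle : ∀ x y z, d x z ≤ d x y + d y z

/-- `(ε,δ)`-differential privacy of `A` w.r.t. the adjacency relation `Φ`. -/
def DP {X Y : Type*} (A : X → Y → ℝ) (Φ : Finset (X × X)) (ε δ : ℝ) : Prop :=
  ∀ p ∈ Φ, ∀ R : Finset Y, probOf (A p.1) R ≤ Real.exp ε * probOf (A p.2) R + δ

/-- `(ε,d,δ)`-extended differential privacy of `A` w.r.t. `Φ`. -/
def XDP {X Y : Type*} (A : X → Y → ℝ) (Φ : Finset (X × X)) (ε : ℝ)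
    (d : X → X → ℝ) (δ : ℝ) : Prop :=
  ∀ p ∈ Φ, ∀ R : Finset Y,
    probOf (A p.1) R ≤ Real.exp (ε * d p.1 p.2) * probOf (A p.2) R + δ

/-- `(ε,δ)`-distribution privacy of `M` w.r.t. a relation `Ψ` on distributions. -/
def DistP {X Z : Type*} [Fintype X] (M : X → Z → ℝ)
    (Ψ : (X → ℝ) → (X → ℝ) → Prop) (ε δ : ℝ) : Prop :=
  ∀ l0 l1, Ψ l0 l1 → ∀ R : Finset Z,
    probOf (liftDist M l0) R ≤ Real.exp ε * probOf (liftDist M l1) R + δ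

/-- `(ε,D,δ)`-extended distribution privacy of `M` w.r.t. `Ψ`. -/
def XDistP {X Z : Type*} [Fintype X] (M : X → Z → ℝ)
    (Ψ : (X → ℝ) → (X → ℝ) → Prop) (ε : ℝ) (D : (X → ℝ) → (X → ℝ) → ℝ) (δ : ℝ) : Prop :=
  ∀ l0 l1, Ψ l0 l1 → ∀ R : Finset Z,
    probOf (liftDist M l0) R ≤ Real.exp (ε * D l0 l1) * probOf (liftDist M l1) R + δ

/-- `(ε,δ)`-probabilistic distribution privacy of `M` w.r.t. `Ψ`. -/
def pDistP {X Z : Type*} [Fintype X] [DecidableEq Z] (M : X → Z → ℝ)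
    (Ψ : (X → ℝ) → (X → ℝ) → Prop) (ε δ : ℝ) : Prop :=
  ∀ l0 l1, Ψ l0 l1 → ∃ R' : Finset Z,
    probOf (liftDist M l0) R' ≤ δ ∧ probOf (liftDist M l1) R' ≤ δ ∧
    ∀ R : Finset Z,
      probOf (liftDist M l0) (R \ R') ≤ Real.exp ε * probOf (liftDist M l1) (R \ R') ∧
      probOf (liftDist M l1) (R \ R') ≤ Real.exp ε * probOf (liftDist M l0) (R \ R')

/-- The uniform distribution on a finite set `Y`. -/
noncomputable def uniformDist (Y : Type*) [Fintype Y] : Y → ℝ :=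
  fun _ => (Fintype.card Y : ℝ)⁻¹

/-- The `(k,ν,A)`-tupling mechanism from `X` to `Y^(k+1)`. -/
noncomputable def tupling {X Y : Type*} [Fintype Y] (k : ℕ) (ν : Y → ℝ) (A : X → Y → ℝ) :
    X → (Fin (k + 1) → Y) → ℝ :=
  fun x yb => ((k : ℝ) + 1)⁻¹ *
    ∑ i : Fin (k + 1), A x (yb i) * ∏ j ∈ Finset.univ.erase i, ν (yb j)

/-- The set of distributions `Λ_{β,η,A}`. -/
def Lam {X Y : Type*} [Fintype X] [Fintype Y] (β η : ℝ) (A : X → Y → ℝ)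
    (l : X → ℝ) : Prop :=
  IsDist l ∧ (1 - η) * (Fintype.card Y : ℝ) ≤ ({y : Y | liftDist A l y ≤ β}.ncard : ℝ)

/-- The product distribution `λ0 × λ1` on `X × X`. -/
def prodDist {X : Type*} (l0 l1 : X → ℝ) : X × X → ℝ := fun p => l0 p.1 * l1 p.2

/-- Sequential composition with shared input. -/
def compShared {X Y0 Y1 : Type*} [Fintype Y0] (A0 : X → Y0 → ℝ)
    (A1 : Y0 → X → Y1 → ℝ) : X → Y1 → ℝ :=
  fun x y1 => ∑ y0, A0 x y0 * A1 y0 x y1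

/-- Sequential composition with independent inputs. -/
def compInd {X Y0 Y1 : Type*} [Fintype Y0] (A0 : X → Y0 → ℝ)
    (A1 : Y0 → X → Y1 → ℝ) : X × X → Y1 → ℝ :=
  fun p y1 => ∑ y0, A0 p.1 y0 * A1 y0 p.2 y1

/-- Post-processing composition. -/
def postProc {X Y Z : Type*} [Fintype Y] (A0 : X → Y → ℝ) (A1 : Y → Z → ℝ) :
    X → Z → ℝ :=
  fun x z => ∑ y, A0 x y * A1 y z

/-- The point distribution at `x`. -/
def pointDist {X : Type*} [DecidableEq X] (x : X) : X → ℝ :=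
  fun x' => if x' = x then 1 else 0

/-- (ε,d,δ)-XDP w.r.t. Φ implies (ε, W∞, δ·|Φ|)-XDistP w.r.t. Φ#∞. -/
theorem xdp_implies_xdistP {X Y : Type*} [Fintype X] [Fintype Y] [Nonempty X] [Nonempty Y]
    (d : X → X → ℝ) (hd : IsMetric d)
    (ε δ : ℝ) (hε : 0 ≤ ε) (hδ0 : 0 ≤ δ) (hδ1 : δ ≤ 1)
    (Φ : Finset (X × X)) (A : X → Y → ℝ) (hA : IsMech A)
    (hXDP : XDP A Φ ε d δ) :
    XDistP A (liftRelInf d Φ) ε (Winf d) (δ * (Φ.card : ℝ)) := by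
  rintro l0 l1 ⟨hl0, hl1, γ, ⟨hγd, hm0, hm1⟩, hsupp, hmax⟩ R
  have hprob : ∀ x : X, 0 ≤ probOf (A x) R := fun x =>
    Finset.sum_nonneg fun y _ => (hA x).1 y
  obtain ⟨p0, hp0⟩ : ∃ p, 0 < γ p := by
    by_contra h
    push_neg at h
    have : ∑ p, γ p = 0 :=
      Finset.sum_eq_zero fun p _ => le_antisymm (h p) (hγd.1 p)
    rw [hγd.2] at this
    norm_num at this
  have hΦ : 1 ≤ (Φ.card : ℝ) := by
    exact_mod_cast Finset.card_pos.mpr ⟨p0, hsupp p0 hp0⟩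
  set M := Winf d l0 l1 with hMdef
  have hM : ∀ p : X × X, 0 < γ p → d p.1 p.2 ≤ M := by
    intro p hp
    rw [← hmax]
    apply le_csSup
    · have hsub : {r | ∃ p : X × X, 0 < γ p ∧ r = d p.1 p.2} ⊆
          (fun p : X × X => d p.1 p.2) '' Set.univ := by
        rintro r ⟨q, _, rfl⟩; exact ⟨q, trivial, rfl⟩
      exact ((Set.finite_univ.image _).subset hsub).bddAbove
    · exact ⟨p, hp, rfl⟩
  have key : ∀ p : X × X, γ p * probOf (A p.1) R ≤
      γ p * (Real.exp (ε * M) * probOf (A p.2) R) + γ p * δ := by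
    intro p
    rcases (hγd.1 p).eq_or_lt with h | h
    · rw [← h]; simp
    · have h1 := hXDP p (hsupp p h) R
      have h2 : Real.exp (ε * d p.1 p.2) ≤ Real.exp (ε * M) :=
        Real.exp_le_exp.mpr (mul_le_mul_of_nonneg_left (hM p h) hε)
      calc γ p * probOf (A p.1) R
          ≤ γ p * (Real.exp (ε * d p.1 p.2) * probOf (A p.2) R + δ) :=
            mul_le_mul_of_nonneg_left h1 h.le
        _ ≤ γ p * (Real.exp (ε * M) * probOf (A p.2) R + δ) := by
            apply mul_le_mul_of_nonneg_left _ h.le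
            exact add_le_add (mul_le_mul_of_nonneg_right h2 (hprob p.2)) le_rfl
        _ = γ p * (Real.exp (ε * M) * probOf (A p.2) R) + γ p * δ := by ring
  have lift0 : probOf (liftDist A l0) R = ∑ p : X × X, γ p * probOf (A p.1) R := by
    unfold probOf liftDist
    rw [Finset.sum_comm]
    simp only [← Finset.mul_sum]
    calc ∑ x, l0 x * ∑ y ∈ R, A x y
        = ∑ x0, ∑ x1, γ (x0, x1) * ∑ y ∈ R, A x0 y := by
          refine Finset.sum_congr rfl fun x0 _ => ?_
          rw [hm0 x0, Finset.sum_mul]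
      _ = ∑ p : X × X, γ p * ∑ y ∈ R, A p.1 y :=
          (Fintype.sum_prod_type (f := fun p : X × X => γ p * ∑ y ∈ R, A p.1 y)).symm
  have lift1 : probOf (liftDist A l1) R = ∑ p : X × X, γ p * probOf (A p.2) R := by
    unfold probOf liftDist
    rw [Finset.sum_comm]
    simp only [← Finset.mul_sum]
    calc ∑ x, l1 x * ∑ y ∈ R, A x y
        = ∑ x1, ∑ x0, γ (x0, x1) * ∑ y ∈ R, A x1 y := by
          refine Finset.sum_congr rfl fun x1 _ => ?_
          rw [hm1 x1, Finset.sum_mul]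
      _ = ∑ x0, ∑ x1, γ (x0, x1) * ∑ y ∈ R, A x1 y := Finset.sum_comm
      _ = ∑ p : X × X, γ p * ∑ y ∈ R, A p.2 y :=
          (Fintype.sum_prod_type (f := fun p : X × X => γ p * ∑ y ∈ R, A p.2 y)).symm
  rw [lift0, lift1]
  calc ∑ p : X × X, γ p * probOf (A p.1) R
      ≤ ∑ p : X × X, (γ p * (Real.exp (ε * M) * probOf (A p.2) R) + γ p * δ) :=
        Finset.sum_le_sum fun p _ => key p
    _ = Real.exp (ε * M) * ∑ p : X × X, γ p * probOf (A p.2) R + δ * ∑ p : X × X, γ p := by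
        rw [Finset.sum_add_distrib, Finset.mul_sum, Finset.mul_sum]
        congr 1
        · apply Finset.sum_congr rfl; intro p _; ring
        · apply Finset.sum_congr rfl; intro p _; ring
    _ ≤ Real.exp (ε * M) * ∑ p : X × X, γ p * probOf (A p.2) R + δ * Φ.card := by
        rw [hγd.2]
        have : δ * 1 ≤ δ * Φ.card := mul_le_mul_of_nonneg_left hΦ hδ0
        linarith
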